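/- Let N be a positive integer, γ ∈ ℂ with |γ| = 1, and i ∈ {0, 1, …, N−1}. Suppose the scalar sequences (a_{nN+i−1}/a_{nN+i} : n ≥ 1), (b_{nN+i}/a_{nN+i} : n ≥ 1) and (γ/a_{nN+i} : n ≥ 1) belong to D̃₁(ℂ). Then for every compact subset K of the line γ·ℝ = {γ·x : x ∈ ℝ}, the sequence of matrix-valued maps (B_{nN+i} : n ≥ 1) belongs to D̃₁(K, GL(2, ℂ)). -/

import Mathlib

open Filter Matrix Topology

noncomputable section

/-- The operator norm of a 2×2 complex matrix (as operator on Euclidean ℂ²). -/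
noncomputable def opNorm (X : Matrix (Fin 2) (Fin 2) ℂ) : ℝ :=
  ‖Matrix.toEuclideanCLM (𝕜 := ℂ) X‖

/-- Entrywise complex conjugation of a matrix. -/
def mconj (X : Matrix (Fin 2) (Fin 2) ℂ) : Matrix (Fin 2) (Fin 2) ℂ :=
  X.map (starRingEnd ℂ)

/-- Hermitian symmetrisation. -/
def symQ (X : Matrix (Fin 2) (Fin 2) ℂ) : Matrix (Fin 2) (Fin 2) ℂ :=
  (2⁻¹ : ℂ) • (X + Xᴴ)

def Ematrix : Matrix (Fin 2) (Fin 2) ℂ := !![0, -1; 1, 0]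

/-- One-step transfer matrix `B_j(z)`. -/
def Bmat (a b : ℕ → ℂ) (j : ℕ) (z : ℂ) : Matrix (Fin 2) (Fin 2) ℂ :=
  !![0, 1; -(a (j-1) / a j), (z - b j) / a j]

/-- `N`-step transfer matrix `X_n(z) = B_{n+N-1}(z) ⋯ B_n(z)`. -/
def transfer (a b : ℕ → ℂ) (N n : ℕ) (z : ℂ) : Matrix (Fin 2) (Fin 2) ℂ :=
  (((List.range N).map fun j => Bmat a b (n + j) z).reverse).prod

/-- Generalised eigenvector associated with `z`. -/
def IsGenEigen (a b : ℕ → ℂ) (z : ℂ) (u : ℕ → ℂ) : Prop :=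
  ¬(u 0 = 0 ∧ u 1 = 0) ∧
    ∀ n, 1 ≤ n → z * u n = a n * u (n+1) + b n * u n + a (n-1) * u (n-1)

/-- The twisted Stolz class `D̃₁(K, GL(2,ℂ))`. -/
def MemD1K (K : Set ℂ) (Y : ℕ → ℂ → Matrix (Fin 2) (Fin 2) ℂ) : Prop :=
  (∀ n, 1 ≤ n → ContinuousOn (Y n) K) ∧
  (∀ n, 1 ≤ n → ∀ z ∈ K, IsUnit (Y n z)) ∧
  (∃ C : ℝ, ∀ n, 1 ≤ n → ∀ z ∈ K, opNorm (Y n z) ≤ C) ∧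
  (∃ g : ℕ → ℝ, Summable g ∧ ∀ n, 1 ≤ n → ∀ z ∈ K,
      opNorm (Y (n+1) z - mconj (Y n z)) ≤ g n)

/-- The twisted Stolz class `D̃₁(ℂ)` for scalar sequences `(x_n : n ≥ 1)`. -/
def MemD1 (x : ℕ → ℂ) : Prop :=
  (∃ C : ℝ, ∀ n, 1 ≤ n → ‖x n‖ ≤ C) ∧
    Summable (fun n : ℕ => ‖x (n+2) - (starRingEnd ℂ) (x (n+1))‖)

def MemD1N (N : ℕ) (x : ℕ → ℂ) : Prop := ∀ i < N, MemD1 (fun n => x (n*N+i))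

/-- The quadratic form `v ↦ ⟨M v, v⟩`. -/
def Qform (M : Matrix (Fin 2) (Fin 2) ℂ) (v : Fin 2 → ℂ) : ℂ :=
  dotProduct (star v) (M.mulVec v)

def Qgam (a b : ℕ → ℂ) (N : ℕ) (γ : ℂ) (n : ℕ) (z : ℂ) (v : Fin 2 → ℂ) : ℂ :=
  Qform (symQ ((a (n+N-1) / (γ * (‖a (n+N-1)‖ : ℂ))) • (Ematrix * transfer a b N n z))) v

def Qtil (a b : ℕ → ℂ) (N : ℕ) (γ : ℂ) (n : ℕ) (z : ℂ) (v : Fin 2 → ℂ) : ℂ :=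
  Qform (symQ ((a (n+N-1) / (γ * (‖a (n+N-1)‖ : ℂ)) *
      (starRingEnd ℂ) (a (n+N-1) / a (n-1))) • (Ematrix * mconj (transfer a b N n z)))) v

/-- The `N`-shifted Turán determinant, expressed via a generalised eigenvector `u`. -/
def Sdet (a b : ℕ → ℂ) (N : ℕ) (γ : ℂ) (z : ℂ) (u : ℕ → ℂ) (n : ℕ) : ℂ :=
  (‖a (n+N-1)‖ : ℂ) * Qgam a b N γ n z ![u (n-1), u n]

/-- Uniform non-degeneracy of a family of quadratic forms. -/
def UnifNonDeg (K : Set ℂ) (Q : ℕ → ℂ → (Fin 2 → ℂ) → ℂ) : Prop :=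
  ∃ c₁ > (0:ℝ), ∃ c₂ > (0:ℝ), ∃ M : ℕ, 1 ≤ M ∧
    ∀ v : Fin 2 → ℂ, ∀ z ∈ K, ∀ n, M ≤ n →
      c₁ * (‖v 0‖^2 + ‖v 1‖^2) ≤ ‖Q n z v‖ ∧ ‖Q n z v‖ ≤ c₂ * (‖v 0‖^2 + ‖v 1‖^2)

def RealEntries (X : Matrix (Fin 2) (Fin 2) ℂ) : Prop := ∀ p q, (X p q).im = 0

def discr (X : Matrix (Fin 2) (Fin 2) ℂ) : ℂ := (Matrix.trace X)^2 - 4 * X.det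

/-- Periodic one-step matrix `𝔅_j(x)` (real). -/
def pB (α β : ℤ → ℝ) (j : ℤ) (x : ℝ) : Matrix (Fin 2) (Fin 2) ℝ :=
  !![0, 1; -(α (j-1) / α j), (x - β j) / α j]

/-- Periodic transfer matrix `𝔛_i(x) = 𝔅_{i+N-1}(x) ⋯ 𝔅_i(x)`. -/
def pX (α β : ℤ → ℝ) (N : ℕ) (i : ℤ) (x : ℝ) : Matrix (Fin 2) (Fin 2) ℝ :=
  (((List.range N).map fun j => pB α β (i + j) x).reverse).prod

/-- The generalised eigenvector with initial data `α`. -/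
def gev (a b : ℕ → ℂ) (z : ℂ) (α : Fin 2 → ℂ) : ℕ → ℂ
  | 0 => α 0
  | 1 => α 1
  | n+2 => ((z - b (n+1)) * gev a b z α (n+1) - a n * gev a b z α n) / a (n+1)

end


section AuxStatement10

open Matrix

lemma euclid_apply_le' (v : EuclideanSpace ℂ (Fin 2)) (j : Fin 2) : ‖v j‖ ≤ ‖v‖ := by
  rw [EuclideanSpace.norm_eq, Fin.sum_univ_two]
  rw [show ‖v j‖ = Real.sqrt (‖v j‖^2) from (Real.sqrt_sq (norm_nonneg _)).symm]
  apply Real.sqrt_le_sqrt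
  have : j = 0 ∨ j = 1 := by omega
  rcases this with h | h <;> subst h <;> nlinarith [sq_nonneg ‖v 0‖, sq_nonneg ‖v 1‖]

lemma euclid_norm_le' (w : EuclideanSpace ℂ (Fin 2)) : ‖w‖ ≤ ‖w 0‖ + ‖w 1‖ := by
  rw [EuclideanSpace.norm_eq, Fin.sum_univ_two]
  calc Real.sqrt (‖w 0‖^2 + ‖w 1‖^2) ≤ Real.sqrt ((‖w 0‖+‖w 1‖)^2) := by
        apply Real.sqrt_le_sqrt; nlinarith [norm_nonneg (w 0), norm_nonneg (w 1)]
    _ = _ := Real.sqrt_sq (by positivity)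

lemma opNorm_le_entries' (X : Matrix (Fin 2) (Fin 2) ℂ) :
    opNorm X ≤ ‖X 0 0‖ + ‖X 0 1‖ + ‖X 1 0‖ + ‖X 1 1‖ := by
  unfold opNorm
  apply ContinuousLinearMap.opNorm_le_bound _ (by positivity)
  intro v
  set w : EuclideanSpace ℂ (Fin 2) := Matrix.toEuclideanCLM (𝕜 := ℂ) X v with hw
  have hwp : ∀ p : Fin 2, w p = X p 0 * v 0 + X p 1 * v 1 := by
    intro p
    have := congrFun (Matrix.ofLp_toEuclideanCLM X v) p
    simp [hw, Matrix.mulVec, dotProduct, Fin.sum_univ_two]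
  have h0 : ‖w 0‖ ≤ (‖X 0 0‖ + ‖X 0 1‖) * ‖v‖ := by
    rw [hwp 0]
    calc ‖X 0 0 * v 0 + X 0 1 * v 1‖ ≤ ‖X 0 0 * v 0‖ + ‖X 0 1 * v 1‖ := norm_add_le _ _
      _ ≤ ‖X 0 0‖ * ‖v‖ + ‖X 0 1‖ * ‖v‖ := by
          rw [norm_mul, norm_mul]
          gcongr <;> exact euclid_apply_le' v _
      _ = _ := by ring
  have h1 : ‖w 1‖ ≤ (‖X 1 0‖ + ‖X 1 1‖) * ‖v‖ := by
    rw [hwp 1]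
    calc ‖X 1 0 * v 0 + X 1 1 * v 1‖ ≤ ‖X 1 0 * v 0‖ + ‖X 1 1 * v 1‖ := norm_add_le _ _
      _ ≤ ‖X 1 0‖ * ‖v‖ + ‖X 1 1‖ * ‖v‖ := by
          rw [norm_mul, norm_mul]
          gcongr <;> exact euclid_apply_le' v _
      _ = _ := by ring
  calc ‖w‖ ≤ ‖w 0‖ + ‖w 1‖ := euclid_norm_le' w
    _ ≤ (‖X 0 0‖ + ‖X 0 1‖) * ‖v‖ + (‖X 1 0‖ + ‖X 1 1‖) * ‖v‖ := add_le_add h0 h1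
    _ = (‖X 0 0‖ + ‖X 0 1‖ + ‖X 1 0‖ + ‖X 1 1‖) * ‖v‖ := by ring

end AuxStatement10

open Filter Matrix Topology in
/-- Proposition 7: membership of the one-step transfer matrices in the twisted
Stolz class on compact subsets of the line γ·ℝ. -/
theorem statement10
    (a b : ℕ → ℂ) (ha : ∀ n, a n ≠ 0)
    (N : ℕ) (hN : 1 ≤ N) (γ : ℂ) (hγ : ‖γ‖ = 1)
    (i : ℕ) (hi : i < N)
    (h1 : MemD1 (fun n => a (n*N+i-1) / a (n*N+i)))
    (h2 : MemD1 (fun n => b (n*N+i) / a (n*N+i)))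
    (h3 : MemD1 (fun n => γ / a (n*N+i)))
    (K : Set ℂ) (hK : IsCompact K)
    (hKline : K ⊆ {w : ℂ | ∃ x : ℝ, w = γ * x}) :
    MemD1K K (fun n z => Bmat a b (n*N+i) z) := by
  classical
  -- a bound on K
  obtain ⟨R0, hR0⟩ := hK.exists_bound_of_continuousOn continuousOn_id
  set R : ℝ := max R0 0 with hRdef
  have hRnn : (0:ℝ) ≤ R := le_max_right _ _
  have hRK : ∀ z ∈ K, ‖z‖ ≤ R := fun z hz => le_trans (hR0 z hz) (le_max_left _ _)
  -- for each z in K, a real parameter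
  have hparam : ∀ z ∈ K, ∃ x : ℝ, z = γ * (x:ℂ) ∧ |x| ≤ R := by
    intro z hz
    obtain ⟨x, hx⟩ := hKline hz
    refine ⟨x, hx, ?_⟩
    have : ‖z‖ = |x| := by rw [hx, norm_mul, hγ, Complex.norm_real, one_mul, Real.norm_eq_abs]
    rw [← this]; exact hRK z hz
  obtain ⟨C1, hC1⟩ := h1.1
  obtain ⟨C2, hC2⟩ := h2.1
  obtain ⟨C3, hC3⟩ := h3.1
  have hC1nn : (0:ℝ) ≤ C1 := le_trans (norm_nonneg _) (hC1 1 le_rfl)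
  have hC2nn : (0:ℝ) ≤ C2 := le_trans (norm_nonneg _) (hC2 1 le_rfl)
  have hC3nn : (0:ℝ) ≤ C3 := le_trans (norm_nonneg _) (hC3 1 le_rfl)
  -- entry lemmas for Bmat
  have e00 : ∀ j z, Bmat a b j z 0 0 = 0 := by intro j z; simp [Bmat]
  have e01 : ∀ j z, Bmat a b j z 0 1 = 1 := by intro j z; simp [Bmat]
  have e10 : ∀ j z, Bmat a b j z 1 0 = -(a (j-1) / a j) := by intro j z; simp [Bmat]
  have e11 : ∀ j z, Bmat a b j z 1 1 = (z - b j) / a j := by intro j z; simp [Bmat]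
  refine ⟨?_, ?_, ?_, ?_⟩
  · -- continuity
    intro n hn
    apply Continuous.continuousOn
    apply continuous_matrix
    intro p q
    fin_cases p <;> fin_cases q <;> simp [Bmat] <;> fun_prop
  · -- invertibility
    intro n hn z hz
    rw [Matrix.isUnit_iff_isUnit_det]
    have hdet : (Bmat a b (n*N+i) z).det = a (n*N+i-1) / a (n*N+i) := by
      simp [Bmat, Matrix.det_fin_two_of]
    rw [hdet]
    exact isUnit_iff_ne_zero.2 (div_ne_zero (ha _) (ha _))
  · -- uniform boundedness
    refine ⟨0 + 1 + C1 + (R * C3 + C2), ?_⟩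
    intro n hn z hz
    obtain ⟨x, hzx, hxR⟩ := hparam z hz
    show opNorm (Bmat a b (n*N+i) z) ≤ 0 + 1 + C1 + (R * C3 + C2)
    refine le_trans (opNorm_le_entries' _) ?_
    rw [e00, e01, e10, e11]
    have h10 : ‖-(a (n*N+i-1) / a (n*N+i))‖ ≤ C1 := by
      rw [norm_neg]; exact hC1 n hn
    have h11 : ‖(z - b (n*N+i)) / a (n*N+i)‖ ≤ R * C3 + C2 := by
      have hsplit : (z - b (n*N+i)) / a (n*N+i)
          = (x:ℂ) * (γ / a (n*N+i)) - b (n*N+i) / a (n*N+i) := by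
        rw [hzx]; field_simp
      rw [hsplit]
      refine le_trans (norm_sub_le _ _) ?_
      have : ‖(x:ℂ) * (γ / a (n*N+i))‖ ≤ R * C3 := by
        rw [norm_mul, Complex.norm_real]
        exact mul_le_mul hxR (hC3 n hn) (norm_nonneg _) hRnn
      exact add_le_add this (hC2 n hn)
    simp only [norm_zero, norm_one]
    gcongr
  · -- summable differences
    set f : ℕ → ℝ := fun m =>
      ‖a ((m+2)*N+i-1) / a ((m+2)*N+i) - (starRingEnd ℂ) (a ((m+1)*N+i-1) / a ((m+1)*N+i))‖ +
      (R * ‖γ / a ((m+2)*N+i) - (starRingEnd ℂ) (γ / a ((m+1)*N+i))‖ +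
       ‖b ((m+2)*N+i) / a ((m+2)*N+i) - (starRingEnd ℂ) (b ((m+1)*N+i) / a ((m+1)*N+i))‖) with hfdef
    have hf : Summable f := (h1.2.add ((h3.2.mul_left R).add h2.2))
    refine ⟨fun n => f (n-1), ?_, ?_⟩
    · have h1' : (fun n => f ((n+1)-1)) = f := by funext n; simp
      exact (summable_nat_add_iff 1).1 (by rw [h1']; exact hf)
    · rintro n hn z hz
      obtain ⟨m, rfl⟩ : ∃ m, n = m+1 := ⟨n-1, by omega⟩
      obtain ⟨x, hzx, hxR⟩ := hparam z hz
      show opNorm (Bmat a b ((m+2)*N+i) z - mconj (Bmat a b ((m+1)*N+i) z)) ≤ f m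
      set D := Bmat a b ((m+2)*N+i) z - mconj (Bmat a b ((m+1)*N+i) z) with hD
      have hD00 : D 0 0 = 0 := by
        simp [hD, mconj, Matrix.sub_apply, Matrix.map_apply, e00]
      have hD01 : D 0 1 = 0 := by
        simp [hD, mconj, Matrix.sub_apply, Matrix.map_apply, e01]
      have hD10 : D 1 0 = -(a ((m+2)*N+i-1) / a ((m+2)*N+i)
          - (starRingEnd ℂ) (a ((m+1)*N+i-1) / a ((m+1)*N+i))) := by
        simp only [hD, Matrix.sub_apply, mconj, Matrix.map_apply, e10]
        rw [map_neg]; ring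
      have hD11 : D 1 1 = (x:ℂ) * (γ / a ((m+2)*N+i) - (starRingEnd ℂ) (γ / a ((m+1)*N+i)))
          - (b ((m+2)*N+i) / a ((m+2)*N+i) - (starRingEnd ℂ) (b ((m+1)*N+i) / a ((m+1)*N+i))) := by
        simp only [hD, Matrix.sub_apply, mconj, Matrix.map_apply, e11]
        rw [hzx]
        rw [map_div₀, map_sub, _root_.map_mul, Complex.conj_ofReal, map_div₀, map_div₀]
        have ha2 : a ((m+2)*N+i) ≠ 0 := ha _
        have ha1 : (starRingEnd ℂ) (a ((m+1)*N+i)) ≠ 0 := by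
          simpa using ha ((m+1)*N+i)
        field_simp
        ring
      refine le_trans (opNorm_le_entries' D) ?_
      rw [hD00, hD01, hD10, hD11, norm_zero, norm_neg]
      have hx1 : ‖(x:ℂ) * (γ / a ((m+2)*N+i) - (starRingEnd ℂ) (γ / a ((m+1)*N+i)))
          - (b ((m+2)*N+i) / a ((m+2)*N+i) - (starRingEnd ℂ) (b ((m+1)*N+i) / a ((m+1)*N+i)))‖
          ≤ R * ‖γ / a ((m+2)*N+i) - (starRingEnd ℂ) (γ / a ((m+1)*N+i))‖ +
            ‖b ((m+2)*N+i) / a ((m+2)*N+i) - (starRingEnd ℂ) (b ((m+1)*N+i) / a ((m+1)*N+i))‖ := by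
        refine le_trans (norm_sub_le _ _) ?_
        gcongr
        rw [norm_mul, Complex.norm_real]
        exact mul_le_mul_of_nonneg_right hxR (norm_nonneg _) |>.trans
          (le_of_eq rfl)
      have : f m = ‖a ((m+2)*N+i-1) / a ((m+2)*N+i)
          - (starRingEnd ℂ) (a ((m+1)*N+i-1) / a ((m+1)*N+i))‖ +
          (R * ‖γ / a ((m+2)*N+i) - (starRingEnd ℂ) (γ / a ((m+1)*N+i))‖ +
           ‖b ((m+2)*N+i) / a ((m+2)*N+i) - (starRingEnd ℂ) (b ((m+1)*N+i) / a ((m+1)*N+i))‖) := rfl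
      rw [this]
      linarith [hx1]
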